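/- Let X and Y be real Banach spaces and let L : X → Y be a bounded linear Fredholm operator with dim ker L = d and dim(Y/range L) = e. Then for all natural numbers d' and e' with d' ≤ d, e' ≤ e, and d' − e' = d − e (as integers), and for every ε > 0, there exists a bounded linear Fredholm operator T : X → Y with ‖T − L‖ < ε, dim ker T = d', and dim(Y/range T) = e'. -/

import Mathlib

set_option maxHeartbeats 1000000

/-- Near a Fredholm operator `L` with `dim ker L = d` and `dim coker L = e`, for all
`d' ≤ d`, `e' ≤ e` with `d' − e' = d − e` and every `ε > 0` there is a Fredholm operator
`T` with `‖T − L‖ < ε`, `dim ker T = d'` and `dim coker T = e'`. -/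
theorem stmt_3
    {X Y : Type*} [NormedAddCommGroup X] [NormedSpace ℝ X] [CompleteSpace X]
    [NormedAddCommGroup Y] [NormedSpace ℝ Y] [CompleteSpace Y]
    (L : X →L[ℝ] Y) (d e d' e' : ℕ)
    (hker : FiniteDimensional ℝ (LinearMap.ker (L : X →ₗ[ℝ] Y)))
    (hcl : IsClosed ((LinearMap.range (L : X →ₗ[ℝ] Y) : Submodule ℝ Y) : Set Y))
    (hcoker : FiniteDimensional ℝ (Y ⧸ LinearMap.range (L : X →ₗ[ℝ] Y)))
    (hd : Module.finrank ℝ (LinearMap.ker (L : X →ₗ[ℝ] Y)) = d)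
    (he : Module.finrank ℝ (Y ⧸ LinearMap.range (L : X →ₗ[ℝ] Y)) = e)
    (hd' : d' ≤ d) (he' : e' ≤ e)
    (hind : (d' : ℤ) - (e' : ℤ) = (d : ℤ) - (e : ℤ))
    (ε : ℝ) (hε : 0 < ε) :
    ∃ T : X →L[ℝ] Y, ‖T - L‖ < ε ∧
      FiniteDimensional ℝ (LinearMap.ker (T : X →ₗ[ℝ] Y)) ∧
      IsClosed ((LinearMap.range (T : X →ₗ[ℝ] Y) : Submodule ℝ Y) : Set Y) ∧
      FiniteDimensional ℝ (Y ⧸ LinearMap.range (T : X →ₗ[ℝ] Y)) ∧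
      Module.finrank ℝ (LinearMap.ker (T : X →ₗ[ℝ] Y)) = d' ∧
      Module.finrank ℝ (Y ⧸ LinearMap.range (T : X →ₗ[ℝ] Y)) = e' := by
  classical
  set R := LinearMap.range (L : X →ₗ[ℝ] Y) with hRdef
  haveI : IsClosed ((R : Submodule ℝ Y) : Set Y) := hcl
  set k := d - d' with hkdef
  have hkd : k ≤ d := Nat.sub_le _ _
  have hke : k ≤ e := by omega
  have hd'k : d' = d - k := by omega
  have he'k : e' = e - k := by omega
  -- bases
  let bK : Module.Basis (Fin d) ℝ (LinearMap.ker (L : X →ₗ[ℝ] Y)) := Module.finBasisOfFinrankEq ℝ _ hd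
  let bQ : Module.Basis (Fin e) ℝ (Y ⧸ R) := Module.finBasisOfFinrankEq ℝ _ he
  -- lifts of cokernel basis vectors
  have hy0 : ∀ i : Fin e, ∃ y : Y, R.mkQ y = bQ i := fun i =>
    Submodule.mkQ_surjective R (bQ i)
  choose y0 hy0 using hy0
  set y : Fin k → Y := fun i => y0 (Fin.castLE hke i) with hydef
  -- extended coordinate functionals
  have hgex : ∀ i : Fin k, ∃ g : X →L[ℝ] ℝ,
      ∀ x : LinearMap.ker (L : X →ₗ[ℝ] Y), g x = bK.coord (Fin.castLE hkd i) x := by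
    intro i
    obtain ⟨g, hg, -⟩ := exists_extension_norm_eq (LinearMap.ker (L : X →ₗ[ℝ] Y))
      (LinearMap.toContinuousLinearMap (bK.coord (Fin.castLE hkd i)))
    exact ⟨g, fun x => by simpa using hg x⟩
  choose g hg using hgex
  have hgb : ∀ (i : Fin k) (j : Fin d),
      g i (bK j : X) = if Fin.castLE hkd i = j then 1 else 0 := by
    intro i j
    rw [hg i (bK j), Module.Basis.coord_apply, Module.Basis.repr_self, Finsupp.single_apply]
    simp [eq_comm]
  -- the perturbation
  set S : X →L[ℝ] Y := ∑ i : Fin k, (g i).smulRight (y i) with hSdef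
  set c : ℝ := ε / (2 * (‖S‖ + 1)) with hcdef
  have hSnorm : (0:ℝ) < ‖S‖ + 1 := by positivity
  have hc : 0 < c := by positivity
  set T : X →L[ℝ] Y := L + c • S with hTdef
  have hTapp : ∀ x, T x = L x + c • ∑ i : Fin k, g i x • y i := by
    intro x
    simp [hTdef, hSdef, ContinuousLinearMap.sum_apply]
  -- linear independence of the chosen cokernel vectors
  have hli : LinearIndependent ℝ (fun i : Fin k => bQ (Fin.castLE hke i)) :=
    bQ.linearIndependent.comp _ (Fin.castLE_injective hke)
  -- kernel characterization
  have hmemker : ∀ x : X, T x = 0 ↔ (L x = 0 ∧ ∀ i : Fin k, g i x = 0) := by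
    intro x
    constructor
    · intro hx
      have h1 : R.mkQ (T x) = ∑ i : Fin k, (c * g i x) • bQ (Fin.castLE hke i) := by
        rw [hTapp]
        simp only [map_add, map_smul, map_sum]
        have hL : R.mkQ (L x) = 0 := (Submodule.Quotient.mk_eq_zero R).2 ⟨x, rfl⟩
        rw [hL, zero_add, Finset.smul_sum]
        refine Finset.sum_congr rfl fun i _ => ?_
        rw [hy0, smul_smul]
      have h2 : ∀ i : Fin k, c * g i x = 0 := by
        have h0 : (∑ i : Fin k, (c * g i x) • bQ (Fin.castLE hke i)) = 0 := by
          rw [← h1, hx, map_zero]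
        exact Fintype.linearIndependent_iff.1 hli _ h0
      have h3 : ∀ i : Fin k, g i x = 0 := fun i =>
        (mul_eq_zero.1 (h2 i)).resolve_left (ne_of_gt hc)
      refine ⟨?_, h3⟩
      have : T x = L x := by rw [hTapp]; simp [h3]
      rw [← this, hx]
    · rintro ⟨h1, h2⟩
      rw [hTapp, h1]; simp [h2]
  -- kernel as image of a kernel inside ker L
  set G : (LinearMap.ker (L : X →ₗ[ℝ] Y)) →ₗ[ℝ] (Fin k → ℝ) :=
    LinearMap.pi (fun i => bK.coord (Fin.castLE hkd i)) with hGdef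
  have hGsurj : Function.Surjective G := by
    intro f
    refine ⟨∑ j : Fin k, f j • bK (Fin.castLE hkd j), ?_⟩
    funext i
    simp only [hGdef, LinearMap.pi_apply, map_sum, map_smul]
    have : ∀ j : Fin k, bK.coord (Fin.castLE hkd i) (bK (Fin.castLE hkd j))
        = if j = i then (1:ℝ) else 0 := by
      intro j
      rw [Module.Basis.coord_apply, Module.Basis.repr_self, Finsupp.single_apply]
      simp [Fin.castLE_inj]
    simp only [smul_eq_mul, this, mul_ite, mul_one, mul_zero]
    simp
  have hkerT : LinearMap.ker (T : X →ₗ[ℝ] Y) = Submodule.map (LinearMap.ker (L : X →ₗ[ℝ] Y)).subtype (LinearMap.ker G) := by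
    ext x
    simp only [LinearMap.mem_ker, Submodule.mem_map, ContinuousLinearMap.coe_coe]
    constructor
    · intro hx
      obtain ⟨h1, h2⟩ := (hmemker x).1 hx
      refine ⟨⟨x, h1⟩, ?_, rfl⟩
      simp only [LinearMap.mem_ker, hGdef]
      funext i
      rw [LinearMap.pi_apply, ← hg i ⟨x, h1⟩]
      exact h2 i
    · rintro ⟨⟨x, hxL⟩, hxG, rfl⟩
      refine (hmemker x).2 ⟨hxL, fun i => ?_⟩
      have := congrFun (congrArg (fun h => (h : Fin k → ℝ)) hxG) i
      simp only [hGdef, LinearMap.pi_apply] at this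
      rw [hg i ⟨x, hxL⟩]
      simpa using this
  have hfinkerG : Module.finrank ℝ (LinearMap.ker G) = d' := by
    have hrn := LinearMap.finrank_range_add_finrank_ker G
    rw [hd, LinearMap.range_eq_top.2 hGsurj, finrank_top] at hrn
    have : Module.finrank ℝ (Fin k → ℝ) = k := by simp
    omega
  have hfinkerT : Module.finrank ℝ (LinearMap.ker (T : X →ₗ[ℝ] Y)) = d' := by
    rw [hkerT, Submodule.finrank_map_subtype_eq, hfinkerG]
  have hFDkerT : FiniteDimensional ℝ (LinearMap.ker (T : X →ₗ[ℝ] Y)) := by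
    rw [hkerT]
    infer_instance
  -- range
  set C : Submodule ℝ Y := Submodule.span ℝ (Set.range y) with hCdef
  haveI : FiniteDimensional ℝ C := FiniteDimensional.span_of_finite ℝ (Set.finite_range y)
  have hrangeT : LinearMap.range (T : X →ₗ[ℝ] Y) = R ⊔ C := by
    apply le_antisymm
    · rintro _ ⟨x, rfl⟩
      rw [ContinuousLinearMap.coe_coe, hTapp]
      refine Submodule.add_mem _ (Submodule.mem_sup_left ⟨x, rfl⟩) ?_
      refine Submodule.mem_sup_right (Submodule.smul_mem _ _ (Submodule.sum_mem _ fun i _ => ?_))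
      exact Submodule.smul_mem _ _ (Submodule.subset_span (Set.mem_range_self i))
    · rw [sup_le_iff]
      constructor
      · rintro _ ⟨x, rfl⟩
        refine ⟨x - ∑ j : Fin k, g j x • (bK (Fin.castLE hkd j) : X), ?_⟩
        have hgz : ∀ i : Fin k, g i (x - ∑ j : Fin k, g j x • (bK (Fin.castLE hkd j) : X)) = 0 := by
          intro i
          simp only [map_sub, map_sum, map_smul, hgb, smul_eq_mul, mul_ite, mul_one, mul_zero]
          simp [Fin.castLE_inj]
        have hLz : L (∑ j : Fin k, g j x • (bK (Fin.castLE hkd j) : X)) = 0 := by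
          rw [map_sum]
          refine Finset.sum_eq_zero fun j _ => ?_
          rw [map_smul]
          have hm := (bK (Fin.castLE hkd j)).2
          rw [LinearMap.mem_ker, ContinuousLinearMap.coe_coe] at hm
          rw [hm, smul_zero]
        rw [ContinuousLinearMap.coe_coe, ContinuousLinearMap.coe_coe, hTapp]
        simp only [hgz, zero_smul, Finset.sum_const_zero, smul_zero, add_zero, map_sub, hLz,
          sub_zero]
      · rw [hCdef, Submodule.span_le]
        rintro _ ⟨i, rfl⟩
        refine ⟨c⁻¹ • (bK (Fin.castLE hkd i) : X), ?_⟩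
        have hLz : L (bK (Fin.castLE hkd i) : X) = 0 := by
          have hm := (bK (Fin.castLE hkd i)).2
          rw [LinearMap.mem_ker] at hm
          simpa using hm
        have hsum : ∑ j : Fin k, g j (c⁻¹ • (bK (Fin.castLE hkd i) : X)) • y j = c⁻¹ • y i := by
          have hco : ∀ j : Fin k, g j (c⁻¹ • (bK (Fin.castLE hkd i) : X))
              = if j = i then c⁻¹ else 0 := by
            intro j
            rw [map_smul, hgb]
            simp [Fin.castLE_inj]
          simp only [hco, ite_smul, zero_smul, Finset.sum_ite_eq', Finset.mem_univ, if_true]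
        rw [ContinuousLinearMap.coe_coe, hTapp, hsum, map_smul, hLz, smul_zero, zero_add, smul_smul,
          mul_inv_cancel₀ (ne_of_gt hc), one_smul]
  -- finite dimensionality and closedness of the range
  have hcomp : R.mkQ ∘ y = fun i : Fin k => bQ (Fin.castLE hke i) := funext fun i => hy0 _
  have hmapC : Submodule.map R.mkQ C
      = Submodule.span ℝ (Set.range (fun i : Fin k => bQ (Fin.castLE hke i))) := by
    rw [hCdef, Submodule.map_span, ← Set.range_comp, hcomp]
  haveI hFDmap : FiniteDimensional ℝ (Submodule.map R.mkQ C) := by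
    rw [hmapC]
    exact FiniteDimensional.span_of_finite ℝ (Set.finite_range _)
  have hfinmapC : Module.finrank ℝ (Submodule.map R.mkQ C) = k := by
    rw [hmapC, finrank_span_eq_card hli, Fintype.card_fin]
  have hcont : Continuous R.mkQ :=
    AddMonoidHomClass.continuous_of_bound R.mkQ 1
      (fun m => by simpa using Submodule.Quotient.norm_mk_le R m)
  have hCQclosed : IsClosed ((Submodule.map R.mkQ C : Submodule ℝ (Y ⧸ R)) : Set (Y ⧸ R)) :=
    Submodule.closed_of_finiteDimensional _
  have hclosed : IsClosed ((R ⊔ C : Submodule ℝ Y) : Set Y) := by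
    have hset : ((R ⊔ C : Submodule ℝ Y) : Set Y)
        = R.mkQ ⁻¹' ((Submodule.map R.mkQ C : Submodule ℝ (Y ⧸ R)) : Set (Y ⧸ R)) := by
      ext z
      simp only [Set.mem_preimage, SetLike.mem_coe, Submodule.mem_map]
      constructor
      · intro hz
        obtain ⟨r, hr, cc, hcc, rfl⟩ := Submodule.mem_sup.1 hz
        refine ⟨cc, hcc, ?_⟩
        rw [Submodule.mkQ_apply, Submodule.mkQ_apply]
        exact (Submodule.Quotient.eq R).2 (by simpa using hr)
      · rintro ⟨cc, hcc, hq⟩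
        have hz : z - cc ∈ R := by
          refine (Submodule.Quotient.eq R).1 ?_
          rw [← Submodule.mkQ_apply, ← Submodule.mkQ_apply, hq]
        refine Submodule.mem_sup.2 ⟨z - cc, hz, cc, hcc, ?_⟩
        abel
    rw [hset]
    exact hCQclosed.preimage hcont
  -- cokernel dimension
  have hmapsup : Submodule.map R.mkQ (R ⊔ C) = Submodule.map R.mkQ C := by
    rw [Submodule.map_sup]
    have hbot : Submodule.map R.mkQ R = ⊥ := by
      rw [eq_bot_iff]
      rintro _ ⟨r, hr, rfl⟩
      simpa using (Submodule.Quotient.mk_eq_zero R).2 hr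
    rw [hbot, bot_sup_eq]
  let eqv : ((Y ⧸ R) ⧸ (Submodule.map R.mkQ C)) ≃ₗ[ℝ] (Y ⧸ (R ⊔ C : Submodule ℝ Y)) :=
    (Submodule.quotEquivOfEq _ _ hmapsup).symm.trans
      (Submodule.quotientQuotientEquivQuotient R (R ⊔ C) le_sup_left)
  haveI hFDcok : FiniteDimensional ℝ (Y ⧸ (R ⊔ C : Submodule ℝ Y)) :=
    LinearEquiv.finiteDimensional eqv
  have hq1 : Module.finrank ℝ (Y ⧸ (R ⊔ C : Submodule ℝ Y)) = e' := by
    rw [← LinearEquiv.finrank_eq eqv]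
    have h2 := Submodule.finrank_quotient_add_finrank (Submodule.map R.mkQ C)
    rw [he, hfinmapC] at h2
    omega
  refine ⟨T, ?_, hFDkerT, ?_, ?_, hfinkerT, ?_⟩
  · have hTL : T - L = c • S := by rw [hTdef]; abel
    rw [hTL]
    have hns : ‖c • S‖ = c * ‖S‖ := by
      rw [norm_smul c S, Real.norm_eq_abs, abs_of_pos hc]
    rw [hns, hcdef, div_mul_eq_mul_div, div_lt_iff₀ (by positivity)]
    nlinarith [norm_nonneg S]
  · rw [hrangeT]
    exact hclosed
  · rw [hrangeT]
    exact hFDcok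
  · rw [hrangeT]
    exact hq1
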